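/- Let V ⊆ F_2^{65} be a spanning binary linear code of dimension 13 with all nonzero weights in {24, 32, 40, 56}. Then a_{56} = (a_2^* − a_3^* − 5)/2, where a_{56} is the number of weight-56 words of V and a_i^* the number of weight-i words of the dual code; in particular a_2^* > 0. -/

import Mathlib

set_option maxRecDepth 8000
set_option maxHeartbeats 1000000

open Finset

/-- Hamming weight of a word over `ZMod 2`. -/
def wt {ι : Type*} [Fintype ι] (v : ι → ZMod 2) : ℕ :=
  (Finset.univ.filter fun i => v i ≠ 0).card

/-- The dual code: annihilator under the standard scalar product. -/
def dualCode {n : ℕ} (V : Submodule (ZMod 2) (Fin n → ZMod 2)) :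
    Submodule (ZMod 2) (Fin n → ZMod 2) where
  carrier := {w | ∀ v ∈ V, ∑ i, v i * w i = 0}
  add_mem' := by
    intro a b ha hb v hv
    simp only [Pi.add_apply, mul_add, Finset.sum_add_distrib, ha v hv, hb v hv, add_zero]
  zero_mem' := by intro v hv; simp
  smul_mem' := by
    intro c a ha v hv
    have h := ha v hv
    calc ∑ i, v i * (c • a) i = c * ∑ i, v i * a i := by
          simp [Finset.mul_sum, mul_left_comm]
      _ = 0 := by rw [h, mul_zero]

/-- A code is spanning if the union of supports of its words is everything. -/
def Spanning {n : ℕ} (V : Submodule (ZMod 2) (Fin n → ZMod 2)) : Prop :=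
  ∀ i : Fin n, ∃ v ∈ V, v i ≠ 0

namespace Stmt18Aux

def e2 (x : ZMod 2) : ℤ := if x = 0 then 1 else -1

lemma e2_add (a b : ZMod 2) : e2 (a + b) = e2 a * e2 b := by revert a b; decide

lemma zmod2_ne (x : ZMod 2) (h : x ≠ 0) : x = 1 := by revert h; revert x; decide

lemma e2_one_add (x : ZMod 2) : e2 (1 + x) = - e2 x := by revert x; decide

def ind2 (i j : Fin 65) : Fin 65 → ZMod 2 :=
  fun t => (if t = i then 1 else 0) + (if t = j then 1 else 0)

def ind3 (i j k : Fin 65) : Fin 65 → ZMod 2 :=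
  fun t => (if t = i then 1 else 0) + ((if t = j then 1 else 0) + (if t = k then 1 else 0))

lemma ind2_dot (v : Fin 65 → ZMod 2) (i j : Fin 65) :
    ∑ t, v t * ind2 i j t = v i + v j := by
  simp [ind2, mul_add, Finset.sum_add_distrib, mul_ite, mul_one, mul_zero,
    Finset.sum_ite_eq']

lemma ind3_dot (v : Fin 65 → ZMod 2) (i j k : Fin 65) :
    ∑ t, v t * ind3 i j k t = v i + v j + v k := by
  simp [ind3, mul_add, Finset.sum_add_distrib, mul_ite, mul_one, mul_zero,
    Finset.sum_ite_eq', add_assoc]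

lemma ind2_supp (i j : Fin 65) (hij : i ≠ j) :
    (Finset.univ.filter fun t => ind2 i j t ≠ 0) = {i, j} := by
  ext t
  simp only [Finset.mem_filter, Finset.mem_univ, true_and, Finset.mem_insert, Finset.mem_singleton]
  by_cases h1 : t = i <;> by_cases h2 : t = j <;> simp_all [ind2, Finset.mem_filter]

lemma ind2_wt (i j : Fin 65) (hij : i ≠ j) : wt (ind2 i j) = 2 := by
  rw [wt, ind2_supp i j hij, Finset.card_pair hij]

lemma ind3_supp (i j k : Fin 65) (hij : i ≠ j) (hik : i ≠ k) (hjk : j ≠ k) :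
    (Finset.univ.filter fun t => ind3 i j k t ≠ 0) = {i, j, k} := by
  ext t
  simp only [Finset.mem_filter, Finset.mem_univ, true_and, Finset.mem_insert, Finset.mem_singleton]
  by_cases h1 : t = i <;> by_cases h2 : t = j <;> by_cases h3 : t = k <;>
    simp_all [ind3, Finset.mem_filter]

lemma ind3_wt (i j k : Fin 65) (hij : i ≠ j) (hik : i ≠ k) (hjk : j ≠ k) :
    wt (ind3 i j k) = 3 := by
  rw [wt, ind3_supp i j k hij hik hjk]
  rw [Finset.card_insert_of_notMem (by simp [hij, hik]), Finset.card_pair hjk]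

lemma ind3_swap12 (i j k : Fin 65) : ind3 j i k = ind3 i j k := by
  funext t; simp only [ind3]; ring

lemma ind3_swap23 (i j k : Fin 65) : ind3 i k j = ind3 i j k := by
  funext t; simp only [ind3]; ring

lemma ind2_eval_ne (i j t : Fin 65) (h1 : t ≠ i) (h2 : t ≠ j) : ind2 i j t = 0 := by
  simp [ind2, h1, h2]

lemma ind2_eval_fst (i j : Fin 65) (hij : i ≠ j) : ind2 i j i = 1 := by
  simp [ind2, hij]

lemma ind3_eval_ne (i j k t : Fin 65) (h1 : t ≠ i) (h2 : t ≠ j) (h3 : t ≠ k) :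
    ind3 i j k t = 0 := by simp [ind3, h1, h2, h3]

lemma ind3_eval_fst (i j k : Fin 65) (hij : i ≠ j) (hik : i ≠ k) : ind3 i j k i = 1 := by
  simp [ind3, hij, hik]

section
variable (V : Submodule (ZMod 2) (Fin 65 → ZMod 2))

lemma mem_dual {w : Fin 65 → ZMod 2} :
    w ∈ dualCode V ↔ ∀ v ∈ V, ∑ i, v i * w i = 0 := Iff.rfl

open Classical in
noncomputable def Vfin : Finset (Fin 65 → ZMod 2) := Finset.univ.filter (· ∈ V)

lemma mem_Vfin {v} : v ∈ Vfin V ↔ v ∈ V := by simp [Vfin]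

open Classical in
noncomputable def P2 : Finset (Fin 65 × Fin 65) :=
  Finset.univ.filter fun p => ∀ v ∈ V, v p.1 + v p.2 = 0

open Classical in
noncomputable def P3 : Finset (Fin 65 × Fin 65 × Fin 65) :=
  Finset.univ.filter fun p => ∀ v ∈ V, v p.1 + v p.2.1 + v p.2.2 = 0

open Classical in
noncomputable def D2 : Finset (Fin 65 → ZMod 2) :=
  Finset.univ.filter fun w => w ∈ dualCode V ∧ wt w = 2

open Classical in
noncomputable def D3 : Finset (Fin 65 → ZMod 2) :=
  Finset.univ.filter fun w => w ∈ dualCode V ∧ wt w = 3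

lemma orth_ne (f : (Fin 65 → ZMod 2) → ZMod 2)
    (hf : ∀ a b, f (a + b) = f a + f b)
    (v₀ : Fin 65 → ZMod 2) (hv₀ : v₀ ∈ V) (h1 : f v₀ ≠ 0) :
    ∑ v ∈ Vfin V, e2 (f v) = 0 := by
  have h1' : f v₀ = 1 := zmod2_ne _ h1
  have hinv : ∀ v, v₀ + (v₀ + v) = v := by
    intro v; rw [← add_assoc]
    have : v₀ + v₀ = 0 := by ext i; exact CharTwo.add_self_eq_zero _
    rw [this, zero_add]
  have key : ∑ v ∈ Vfin V, e2 (f (v₀ + v)) = ∑ v ∈ Vfin V, e2 (f v) := by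
    apply Finset.sum_nbij' (fun v => v₀ + v) (fun v => v₀ + v)
    · intro a ha; rw [mem_Vfin] at *; exact V.add_mem hv₀ ha
    · intro a ha; rw [mem_Vfin] at *; exact V.add_mem hv₀ ha
    · intro a _; exact hinv a
    · intro a _; exact hinv a
    · intro a _; rfl
  have key2 : ∑ v ∈ Vfin V, e2 (f (v₀ + v)) = - ∑ v ∈ Vfin V, e2 (f v) := by
    rw [← Finset.sum_neg_distrib]
    exact Finset.sum_congr rfl fun v _ => by rw [hf, h1', e2_one_add]
  linarith [key, key2]

lemma orth_all (f : (Fin 65 → ZMod 2) → ZMod 2)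
    (h0 : ∀ v ∈ V, f v = 0) :
    ∑ v ∈ Vfin V, e2 (f v) = ((Vfin V).card : ℤ) := by
  rw [Finset.sum_congr rfl fun v hv => by rw [h0 v ((mem_Vfin V).mp hv)]]
  simp [e2]

lemma ind2_comm (i j : Fin 65) : ind2 i j = ind2 j i := by
  funext t; simp only [ind2]; ring

lemma ind2_eval_snd (i j : Fin 65) (hij : i ≠ j) : ind2 i j j = 1 := by
  simp [ind2, hij.symm]

/-- pairs: card P2 = 65 + 2 * card D2 -/
lemma card_P2 : ((P2 V).card : ℤ) = 65 + 2 * ((D2 V).card : ℤ) := by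
  classical
  have hsplit := Finset.card_filter_add_card_filter_not
    (s := P2 V) (p := fun p => p.1 = p.2)
  -- diagonal part
  have hdiagcard : ((P2 V).filter (fun p => p.1 = p.2)).card = 65 := by
    have hdiag : (P2 V).filter (fun p => p.1 = p.2) =
        Finset.univ.image (fun i : Fin 65 => (i, i)) := by
      ext ⟨x, y⟩
      simp only [Finset.mem_filter, Finset.mem_image, Finset.mem_univ, true_and, P2]
      constructor
      · rintro ⟨-, h⟩
        exact ⟨x, by rw [show y = x from h.symm]⟩
      · rintro ⟨i, hi⟩
        obtain ⟨rfl, rfl⟩ := Prod.mk.injEq .. ▸ hi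
        exact ⟨fun v _ => CharTwo.add_self_eq_zero _, rfl⟩
    rw [hdiag, Finset.card_image_of_injective _ (fun a b h => (Prod.ext_iff.mp h).1)]
    simp
  -- off-diagonal part
  have hmaps : ∀ p ∈ (P2 V).filter (fun p => ¬ p.1 = p.2),
      ind2 p.1 p.2 ∈ D2 V := by
    intro p hp
    simp only [Finset.mem_filter, P2, Finset.mem_univ, true_and] at hp
    obtain ⟨hcond, hne⟩ := hp
    simp only [D2, Finset.mem_filter, Finset.mem_univ, true_and]
    refine ⟨?_, ind2_wt _ _ hne⟩
    rw [mem_dual]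
    intro v hv
    rw [ind2_dot]
    exact hcond v hv
  have hoffcard : ((P2 V).filter (fun p => ¬ p.1 = p.2)).card = 2 * (D2 V).card := by
    calc ((P2 V).filter (fun p => ¬ p.1 = p.2)).card
        = ∑ w ∈ D2 V, (((P2 V).filter (fun p => ¬ p.1 = p.2)).filter
            (fun p => ind2 p.1 p.2 = w)).card :=
          Finset.card_eq_sum_card_fiberwise hmaps
      _ = ∑ _w ∈ D2 V, 2 := by
          refine Finset.sum_congr rfl fun w hw => ?_
          simp only [D2, Finset.mem_filter, Finset.mem_univ, true_and] at hw
          obtain ⟨hwdual, hwwt⟩ := hw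
          obtain ⟨a, b, hab, hsupp⟩ := Finset.card_eq_two.mp hwwt
          have hmema : a ∈ Finset.univ.filter fun t => w t ≠ 0 := by rw [hsupp]; simp
          have hmemb : b ∈ Finset.univ.filter fun t => w t ≠ 0 := by rw [hsupp]; simp
          have hwa : w a = 1 := zmod2_ne _ (by simpa using hmema)
          have hwb : w b = 1 := zmod2_ne _ (by simpa using hmemb)
          have hwt0 : ∀ t, t ≠ a → t ≠ b → w t = 0 := by
            intro t h1 h2
            by_contra h
            have : t ∈ Finset.univ.filter fun t => w t ≠ 0 := by simp [h]
            rw [hsupp] at this; simp [h1, h2] at this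
          have hweq : w = ind2 a b := by
            funext t
            by_cases h1 : t = a <;> by_cases h2 : t = b <;> simp_all [ind2, Finset.mem_filter]
          have hcond : ∀ v ∈ V, v a + v b = 0 := by
            intro v hv
            have := (mem_dual V).mp hwdual v hv
            rwa [hweq, ind2_dot] at this
          have hfib : ((P2 V).filter (fun p => ¬ p.1 = p.2)).filter
              (fun p => ind2 p.1 p.2 = w) = {(a, b), (b, a)} := by
            ext p
            simp only [Finset.mem_filter, P2, Finset.mem_univ, true_and,
              Finset.mem_insert, Finset.mem_singleton]
            constructor
            · rintro ⟨⟨hp2, hne⟩, heq⟩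
              have m1 : p.1 = a ∨ p.1 = b := by
                have h1 : w p.1 ≠ 0 := by
                  rw [← heq, ind2_eval_fst _ _ hne]; exact one_ne_zero
                have : p.1 ∈ Finset.univ.filter fun t => w t ≠ 0 := by simp [h1]
                rw [hsupp] at this; simpa using this
              have m2 : p.2 = a ∨ p.2 = b := by
                have h2 : w p.2 ≠ 0 := by
                  rw [← heq, ind2_eval_snd _ _ hne]; exact one_ne_zero
                have : p.2 ∈ Finset.univ.filter fun t => w t ≠ 0 := by simp [h2]
                rw [hsupp] at this; simpa using this
              rcases m1 with h|h <;> rcases m2 with h'|h' <;>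
                simp_all [Prod.ext_iff]
            · rintro (rfl | rfl)
              · exact ⟨⟨hcond, hab⟩, hweq.symm⟩
              · refine ⟨⟨fun v hv => by rw [add_comm]; exact hcond v hv, hab.symm⟩, ?_⟩
                rw [ind2_comm]; exact hweq.symm
          rw [hfib]
          rw [Finset.card_insert_of_notMem (by simp [Prod.ext_iff, hab]),
            Finset.card_singleton]
      _ = 2 * (D2 V).card := by rw [Finset.sum_const, smul_eq_mul, mul_comm]
  push_cast [← hsplit, hdiagcard, hoffcard]
  ring


lemma ind3_eval_snd (i j k : Fin 65) (hji : j ≠ i) (hjk : j ≠ k) : ind3 i j k j = 1 := by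
  simp [ind3, hji, hjk]

lemma ind3_eval_thd (i j k : Fin 65) (hki : k ≠ i) (hkj : k ≠ j) : ind3 i j k k = 1 := by
  simp [ind3, hki, hkj]

lemma P3_ne (hspan : Spanning V) :
    ∀ p ∈ P3 V, p.1 ≠ p.2.1 ∧ p.1 ≠ p.2.2 ∧ p.2.1 ≠ p.2.2 := by
  rintro ⟨x, y, z⟩ hp
  simp only [P3, Finset.mem_filter, Finset.mem_univ, true_and] at hp
  refine ⟨?_, ?_, ?_⟩
  · show x ≠ y
    rintro rfl
    obtain ⟨v, hv, hne⟩ := hspan z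
    apply hne
    have h := hp v hv
    rwa [CharTwo.add_self_eq_zero, zero_add] at h
  · show x ≠ z
    rintro rfl
    obtain ⟨v, hv, hne⟩ := hspan y
    apply hne
    have h := hp v hv
    rwa [add_comm (v x) (v y), add_assoc, CharTwo.add_self_eq_zero, add_zero] at h
  · show y ≠ z
    rintro rfl
    obtain ⟨v, hv, hne⟩ := hspan x
    apply hne
    have h := hp v hv
    rwa [add_assoc, CharTwo.add_self_eq_zero, add_zero] at h

/-- triples: card P3 = 6 * card D3 -/
lemma card_P3 (hspan : Spanning V) : ((P3 V).card : ℤ) = 6 * ((D3 V).card : ℤ) := by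
  classical
  have hmaps : ∀ p ∈ P3 V, ind3 p.1 p.2.1 p.2.2 ∈ D3 V := by
    intro p hp
    obtain ⟨h12, h13, h23⟩ := P3_ne V hspan p hp
    simp only [P3, Finset.mem_filter, Finset.mem_univ, true_and] at hp
    simp only [D3, Finset.mem_filter, Finset.mem_univ, true_and]
    refine ⟨?_, ind3_wt _ _ _ h12 h13 h23⟩
    rw [mem_dual]
    intro v hv
    rw [ind3_dot]
    exact hp v hv
  have hcount : (P3 V).card = ∑ w ∈ D3 V, 6 := by
    rw [Finset.card_eq_sum_card_fiberwise hmaps]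
    refine Finset.sum_congr rfl fun w hw => ?_
    simp only [D3, Finset.mem_filter, Finset.mem_univ, true_and] at hw
    obtain ⟨hwdual, hwwt⟩ := hw
    obtain ⟨a, b, c, hab, hac, hbc, hsupp⟩ := Finset.card_eq_three.mp hwwt
    have hwa : w a = 1 := zmod2_ne _ (by
      have : a ∈ Finset.univ.filter fun t => w t ≠ 0 := by rw [hsupp]; simp
      simpa using this)
    have hwb : w b = 1 := zmod2_ne _ (by
      have : b ∈ Finset.univ.filter fun t => w t ≠ 0 := by rw [hsupp]; simp
      simpa using this)
    have hwc : w c = 1 := zmod2_ne _ (by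
      have : c ∈ Finset.univ.filter fun t => w t ≠ 0 := by rw [hsupp]; simp
      simpa using this)
    have hwt0 : ∀ t, t ≠ a → t ≠ b → t ≠ c → w t = 0 := by
      intro t h1 h2 h3
      by_contra h
      have : t ∈ Finset.univ.filter fun t => w t ≠ 0 := by simp [h]
      rw [hsupp] at this; simp [h1, h2, h3] at this
    have hweq : w = ind3 a b c := by
      funext t
      by_cases h1 : t = a <;> by_cases h2 : t = b <;> by_cases h3 : t = c <;>
        simp_all [ind3, Finset.mem_filter]
    have hcond : ∀ v ∈ V, v a + v b + v c = 0 := by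
      intro v hv
      have := (mem_dual V).mp hwdual v hv
      rwa [hweq, ind3_dot] at this
    have hfib : (P3 V).filter (fun p => ind3 p.1 p.2.1 p.2.2 = w)
        = {(a,b,c), (a,c,b), (b,a,c), (b,c,a), (c,a,b), (c,b,a)} := by
      ext p
      simp only [Finset.mem_filter, Finset.mem_insert, Finset.mem_singleton]
      constructor
      · rintro ⟨hpP3, heq⟩
        obtain ⟨h12, h13, h23⟩ := P3_ne V hspan p hpP3
        have m1 : p.1 = a ∨ p.1 = b ∨ p.1 = c := by
          have h1 : w p.1 ≠ 0 := by
            rw [← heq, ind3_eval_fst _ _ _ h12 h13]; exact one_ne_zero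
          have : p.1 ∈ Finset.univ.filter fun t => w t ≠ 0 := by simp [h1]
          rw [hsupp] at this; simpa using this
        have m2 : p.2.1 = a ∨ p.2.1 = b ∨ p.2.1 = c := by
          have h1 : w p.2.1 ≠ 0 := by
            rw [← heq, ind3_eval_snd _ _ _ h12.symm h23]; exact one_ne_zero
          have : p.2.1 ∈ Finset.univ.filter fun t => w t ≠ 0 := by simp [h1]
          rw [hsupp] at this; simpa using this
        have m3 : p.2.2 = a ∨ p.2.2 = b ∨ p.2.2 = c := by
          have h1 : w p.2.2 ≠ 0 := by
            rw [← heq, ind3_eval_thd _ _ _ h13.symm h23.symm]; exact one_ne_zero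
          have : p.2.2 ∈ Finset.univ.filter fun t => w t ≠ 0 := by simp [h1]
          rw [hsupp] at this; simpa using this
        rcases m1 with h|h|h <;> rcases m2 with h'|h'|h' <;> rcases m3 with h''|h''|h'' <;>
          simp_all [Prod.ext_iff]
      · have hP3mem : ∀ x y z : Fin 65, (∀ v ∈ V, v x + v y + v z = 0) →
            (x, y, z) ∈ P3 V := by
          intro x y z h
          simp only [P3, Finset.mem_filter, Finset.mem_univ, true_and]
          exact h
        rintro (rfl|rfl|rfl|rfl|rfl|rfl)
        · exact ⟨hP3mem _ _ _ hcond, hweq.symm⟩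
        · refine ⟨hP3mem _ _ _ fun v hv => ?_, ?_⟩
          · rw [show v a + v c + v b = v a + v b + v c by ring]; exact hcond v hv
          · rw [show ind3 a c b = ind3 a b c by funext t; simp only [ind3]; ring]
            exact hweq.symm
        · refine ⟨hP3mem _ _ _ fun v hv => ?_, ?_⟩
          · rw [show v b + v a + v c = v a + v b + v c by ring]; exact hcond v hv
          · rw [show ind3 b a c = ind3 a b c by funext t; simp only [ind3]; ring]
            exact hweq.symm
        · refine ⟨hP3mem _ _ _ fun v hv => ?_, ?_⟩
          · rw [show v b + v c + v a = v a + v b + v c by ring]; exact hcond v hv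
          · rw [show ind3 b c a = ind3 a b c by funext t; simp only [ind3]; ring]
            exact hweq.symm
        · refine ⟨hP3mem _ _ _ fun v hv => ?_, ?_⟩
          · rw [show v c + v a + v b = v a + v b + v c by ring]; exact hcond v hv
          · rw [show ind3 c a b = ind3 a b c by funext t; simp only [ind3]; ring]
            exact hweq.symm
        · refine ⟨hP3mem _ _ _ fun v hv => ?_, ?_⟩
          · rw [show v c + v b + v a = v a + v b + v c by ring]; exact hcond v hv
          · rw [show ind3 c b a = ind3 a b c by funext t; simp only [ind3]; ring]
            exact hweq.symm
    rw [hfib]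
    rw [Finset.card_insert_of_notMem (by simp [Prod.ext_iff, hab, hac, hbc]),
      Finset.card_insert_of_notMem (by simp [Prod.ext_iff, hab, hac, hbc, hab.symm]),
      Finset.card_insert_of_notMem (by
        simp [Prod.ext_iff, hab, hac, hbc, hab.symm, hac.symm, hbc.symm]),
      Finset.card_insert_of_notMem (by
        simp [Prod.ext_iff, hab, hac, hbc, hab.symm, hac.symm, hbc.symm]),
      Finset.card_insert_of_notMem (by
        simp [Prod.ext_iff, hab, hac, hbc, hab.symm, hac.symm, hbc.symm]),
      Finset.card_singleton]
  rw [hcount, Finset.sum_const, smul_eq_mul]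
  push_cast
  ring

lemma sum_pow2 {α : Type*} [Fintype α] (f : α → ℤ) :
    (∑ i, f i) ^ 2 = ∑ p : α × α, f p.1 * f p.2 := by
  rw [pow_two, Finset.sum_mul_sum]
  exact (Fintype.sum_prod_type (fun p : α × α => f p.1 * f p.2)).symm

lemma sum_pow3 {α : Type*} [Fintype α] (f : α → ℤ) :
    (∑ i, f i) ^ 3 = ∑ p : α × α × α, f p.1 * f p.2.1 * f p.2.2 := by
  calc (∑ i, f i) ^ 3 = (∑ i, f i) * (∑ i, f i) ^ 2 := by ring
    _ = (∑ i, f i) * (∑ q : α × α, f q.1 * f q.2) := by rw [sum_pow2]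
    _ = ∑ i, ∑ q : α × α, f i * (f q.1 * f q.2) := by rw [Finset.sum_mul_sum]
    _ = ∑ p : α × α × α, f p.1 * (f p.2.1 * f p.2.2) :=
        (Fintype.sum_prod_type (fun p : α × α × α => f p.1 * (f p.2.1 * f p.2.2))).symm
    _ = ∑ p : α × α × α, f p.1 * f p.2.1 * f p.2.2 :=
        Finset.sum_congr rfl fun p _ => by ring

lemma s_eq (v : Fin 65 → ZMod 2) :
    ∑ i, e2 (v i) = 65 - 2 * (wt v : ℤ) := by
  have h : ∀ i : Fin 65, e2 (v i) = 1 - 2 * (if v i ≠ 0 then (1 : ℤ) else 0) := by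
    intro i
    by_cases hz : v i = 0 <;> simp [e2, hz]
  rw [Finset.sum_congr rfl fun i _ => h i, Finset.sum_sub_distrib]
  rw [← Finset.mul_sum, Finset.sum_boole, wt]
  simp

lemma hM1 (hspan : Spanning V) : ∑ v ∈ Vfin V, (∑ i, e2 (v i)) = 0 := by
  rw [Finset.sum_comm]
  refine Finset.sum_eq_zero fun i _ => ?_
  obtain ⟨v₀, hv₀, h1⟩ := hspan i
  exact orth_ne V (fun v => v i) (fun a b => rfl) v₀ hv₀ h1

lemma hM2 : ∑ v ∈ Vfin V, (∑ i, e2 (v i)) ^ 2 =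
    ((P2 V).card : ℤ) * ((Vfin V).card : ℤ) := by
  classical
  have hexp : ∀ v : Fin 65 → ZMod 2, (∑ i, e2 (v i)) ^ 2 =
      ∑ p : Fin 65 × Fin 65, e2 (v p.1 + v p.2) := by
    intro v
    rw [sum_pow2]
    exact Finset.sum_congr rfl fun p _ => (e2_add _ _).symm
  rw [Finset.sum_congr rfl fun v _ => hexp v, Finset.sum_comm]
  have hp : ∀ p : Fin 65 × Fin 65, ∑ v ∈ Vfin V, e2 (v p.1 + v p.2) =
      if (∀ v ∈ V, v p.1 + v p.2 = 0) then ((Vfin V).card : ℤ) else 0 := by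
    intro p
    by_cases h : ∀ v ∈ V, v p.1 + v p.2 = 0
    · rw [if_pos h]; exact orth_all V _ h
    · rw [if_neg h]
      push_neg at h
      obtain ⟨v₀, hv₀, h1⟩ := h
      refine orth_ne V (fun v => v p.1 + v p.2) (fun a b => by
        simp only [Pi.add_apply]; ring) v₀ hv₀ h1
  rw [Finset.sum_congr rfl fun p _ => hp p, Finset.sum_ite, Finset.sum_const,
    Finset.sum_const_zero, add_zero, nsmul_eq_mul]
  have hset : Finset.univ.filter (fun p : Fin 65 × Fin 65 => ∀ v ∈ V, v p.1 + v p.2 = 0)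
      = P2 V := by
    ext p; simp [P2]
  rw [hset]

lemma hM3 : ∑ v ∈ Vfin V, (∑ i, e2 (v i)) ^ 3 =
    ((P3 V).card : ℤ) * ((Vfin V).card : ℤ) := by
  classical
  have hexp : ∀ v : Fin 65 → ZMod 2, (∑ i, e2 (v i)) ^ 3 =
      ∑ p : Fin 65 × Fin 65 × Fin 65, e2 (v p.1 + v p.2.1 + v p.2.2) := by
    intro v
    rw [sum_pow3]
    refine Finset.sum_congr rfl fun p _ => ?_
    rw [e2_add, e2_add]
  rw [Finset.sum_congr rfl fun v _ => hexp v, Finset.sum_comm]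
  have hp : ∀ p : Fin 65 × Fin 65 × Fin 65,
      ∑ v ∈ Vfin V, e2 (v p.1 + v p.2.1 + v p.2.2) =
      if (∀ v ∈ V, v p.1 + v p.2.1 + v p.2.2 = 0) then ((Vfin V).card : ℤ) else 0 := by
    intro p
    by_cases h : ∀ v ∈ V, v p.1 + v p.2.1 + v p.2.2 = 0
    · rw [if_pos h]; exact orth_all V _ h
    · rw [if_neg h]
      push_neg at h
      obtain ⟨v₀, hv₀, h1⟩ := h
      refine orth_ne V (fun v => v p.1 + v p.2.1 + v p.2.2) (fun a b => by
        simp only [Pi.add_apply]; ring) v₀ hv₀ h1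
  rw [Finset.sum_congr rfl fun p _ => hp p, Finset.sum_ite, Finset.sum_const,
    Finset.sum_const_zero, add_zero, nsmul_eq_mul]
  have hset : Finset.univ.filter
      (fun p : Fin 65 × Fin 65 × Fin 65 => ∀ v ∈ V, v p.1 + v p.2.1 + v p.2.2 = 0)
      = P3 V := by
    ext p; simp [P3]
  rw [hset]

lemma wt_eq_zero_iff (v : Fin 65 → ZMod 2) : wt v = 0 ↔ v = 0 := by
  simp [wt, Finset.card_eq_zero, Finset.filter_eq_empty_iff, funext_iff]

end
end Stmt18Aux

open Stmt18Aux
theorem stmt18 (V : Submodule (ZMod 2) (Fin 65 → ZMod 2))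
    (hspan : Spanning V) (hd : Module.finrank (ZMod 2) V = 13)
    (hwt : ∀ v ∈ V, v ≠ 0 → wt v = 24 ∨ wt v = 32 ∨ wt v = 40 ∨ wt v = 56) :
    2 * ({v | v ∈ V ∧ wt v = 56}.ncard : ℤ) =
        ({w | w ∈ dualCode V ∧ wt w = 2}.ncard : ℤ)
          - ({w | w ∈ dualCode V ∧ wt w = 3}.ncard : ℤ) - 5 ∧
    0 < {w | w ∈ dualCode V ∧ wt w = 2}.ncard := by
  classical
  -- cardinality of the code
  have hcard : ((Vfin V).card : ℤ) = 8192 := by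
    have h1 : Fintype.card V = 2 ^ 13 := by
      have h := Module.card_eq_pow_finrank (K := ZMod 2) (V := ↥V)
      rwa [ZMod.card, hd] at h
    have h2 : (Vfin V).card = Fintype.card V := by
      rw [Vfin]
      exact (Fintype.card_subtype _).symm
    rw [h2, h1]; norm_num
  -- weight class counts
  set n : ℕ → ℕ := fun t => ((Vfin V).filter fun v => wt v = t).card with hn
  have hmapsto : ∀ v ∈ Vfin V, wt v ∈ ({0,24,32,40,56} : Finset ℕ) := by
    intro v hv
    by_cases hz : v = 0
    · subst hz
      simp [(wt_eq_zero_iff 0).mpr rfl]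
    · rcases hwt v ((mem_Vfin V).mp hv) hz with h|h|h|h <;> simp [h]
  have key : ∀ g : ℕ → ℤ, ∑ v ∈ Vfin V, g (wt v) =
      (n 0 : ℤ) * g 0 + n 24 * g 24 + n 32 * g 32 + n 40 * g 40 + n 56 * g 56 := by
    intro g
    rw [← Finset.sum_fiberwise_of_maps_to hmapsto (fun v => g (wt v))]
    have inner : ∀ t ∈ ({0,24,32,40,56} : Finset ℕ),
        ∑ v ∈ (Vfin V).filter (fun v => wt v = t), g (wt v) = (n t : ℤ) * g t := by
      intro t _
      rw [Finset.sum_congr rfl (fun v hv => by rw [(Finset.mem_filter.mp hv).2]),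
        Finset.sum_const, nsmul_eq_mul]
    rw [Finset.sum_congr rfl inner,
      show ({0,24,32,40,56} : Finset ℕ)
        = insert 0 (insert 24 (insert 32 (insert 40 {56}))) from rfl,
      Finset.sum_insert (by decide), Finset.sum_insert (by decide),
      Finset.sum_insert (by decide), Finset.sum_insert (by decide),
      Finset.sum_singleton]
    ring
  have hn0 : ((n 0 : ℕ) : ℤ) = 1 := by
    have hfil : (Vfin V).filter (fun v => wt v = 0) = {0} := by
      ext v
      simp only [Finset.mem_filter, mem_Vfin, Finset.mem_singleton]
      constructor
      · rintro ⟨-, h⟩; exact (wt_eq_zero_iff v).mp h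
      · rintro rfl; exact ⟨V.zero_mem, (wt_eq_zero_iff 0).mpr rfl⟩
    have : n 0 = 1 := by rw [hn]; simp only [hfil, Finset.card_singleton]
    rw [this]; norm_num
  -- the four moment equations
  have E0' : ∑ v ∈ Vfin V, (fun _ : ℕ => (1:ℤ)) (wt v) = 8192 := by
    rw [Finset.sum_const, nsmul_eq_mul, mul_one, hcard]
  have E0 := key (fun _ => (1:ℤ))
  rw [E0'] at E0
  have E1' : ∑ v ∈ Vfin V, (fun t : ℕ => 65 - 2 * (t:ℤ)) (wt v) = 0 := by
    calc ∑ v ∈ Vfin V, (65 - 2 * ((wt v):ℤ))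
        = ∑ v ∈ Vfin V, ∑ i, e2 (v i) :=
          Finset.sum_congr rfl fun v _ => (s_eq v).symm
      _ = 0 := hM1 V hspan
  have E1 := key (fun t => 65 - 2 * (t:ℤ))
  rw [E1'] at E1
  have E2' : ∑ v ∈ Vfin V, (fun t : ℕ => (65 - 2 * (t:ℤ))^2) (wt v)
      = (65 + 2 * ((D2 V).card : ℤ)) * 8192 := by
    calc ∑ v ∈ Vfin V, (65 - 2 * ((wt v):ℤ))^2
        = ∑ v ∈ Vfin V, (∑ i, e2 (v i))^2 :=
          Finset.sum_congr rfl fun v _ => by rw [s_eq]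
      _ = ((P2 V).card : ℤ) * ((Vfin V).card : ℤ) := hM2 V
      _ = (65 + 2 * ((D2 V).card : ℤ)) * 8192 := by rw [card_P2, hcard]
  have E2 := key (fun t => (65 - 2 * (t:ℤ))^2)
  rw [E2'] at E2
  have E3' : ∑ v ∈ Vfin V, (fun t : ℕ => (65 - 2 * (t:ℤ))^3) (wt v)
      = (6 * ((D3 V).card : ℤ)) * 8192 := by
    calc ∑ v ∈ Vfin V, (65 - 2 * ((wt v):ℤ))^3
        = ∑ v ∈ Vfin V, (∑ i, e2 (v i))^3 :=
          Finset.sum_congr rfl fun v _ => by rw [s_eq]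
      _ = ((P3 V).card : ℤ) * ((Vfin V).card : ℤ) := hM3 V
      _ = (6 * ((D3 V).card : ℤ)) * 8192 := by rw [card_P3 V hspan, hcard]
  have E3 := key (fun t => (65 - 2 * (t:ℤ))^3)
  rw [E3'] at E3
  norm_num [hn0] at E0 E1 E2 E3
  -- identify the ncards
  have hA : ({w | w ∈ dualCode V ∧ wt w = 2}.ncard : ℤ) = ((D2 V).card : ℤ) := by
    congr 1
    rw [Set.ncard_eq_toFinset_card']
    congr 1
    ext w
    simp [D2, Set.mem_toFinset]
  have hB : ({w | w ∈ dualCode V ∧ wt w = 3}.ncard : ℤ) = ((D3 V).card : ℤ) := by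
    congr 1
    rw [Set.ncard_eq_toFinset_card']
    congr 1
    ext w
    simp [D3, Set.mem_toFinset]
  have hD : ({v | v ∈ V ∧ wt v = 56}.ncard : ℤ) = ((n 56 : ℕ) : ℤ) := by
    congr 1
    rw [Set.ncard_eq_toFinset_card']
    rw [hn]
    congr 1
    ext v
    simp [Vfin, Set.mem_toFinset, Finset.mem_filter]
  have main : 2 * ((n 56 : ℕ) : ℤ) = ((D2 V).card : ℤ) - ((D3 V).card : ℤ) - 5 := by
    linarith [E0, E1, E2, E3]
  constructor
  · rw [hA, hB, hD]; exact main
  · have h5 : (5 : ℤ) ≤ ((D2 V).card : ℤ) := by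
      have : (0 : ℤ) ≤ ((n 56 : ℕ) : ℤ) := Int.ofNat_nonneg _
      have : (0 : ℤ) ≤ ((D3 V).card : ℤ) := Int.ofNat_nonneg _
      linarith [main, Int.ofNat_nonneg (n 56), Int.ofNat_nonneg (D3 V).card]
    have : 0 < ({w | w ∈ dualCode V ∧ wt w = 2}.ncard : ℤ) := by rw [hA]; linarith
    exact_mod_cast this
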